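/- Fix θ ∈ ℝ^d and let g^1, g^2, ... be ℝ^d-valued random vectors with E[g^s | F_{s−1}] = ∇f(θ) and E[‖g^s − ∇f(θ)‖² | F_{s−1}] ≤ σ². Let b ≤ b_max be a bounded stopping time, α = b, and g = (1/b)Σ_{s=1}^b g^s. Then E[α² ‖g‖²] ≤ 2 b_max E[α ‖∇f(θ)‖²] + 2σ² E[b]. -/

import Mathlib

open MeasureTheory ProbabilityTheory

section Aux
variable {α : Type*} {m m0 : MeasurableSpace α}

lemma aux_integrable_inner {E : Type*} [NormedAddCommGroup E] [InnerProductSpace ℝ E]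
    {m : MeasurableSpace α} {μ : Measure α}
    {f g : α → E} (hf : MemLp f 2 μ) (hg : MemLp g 2 μ) :
    Integrable (fun ω => (inner ℝ (f ω) (g ω) : ℝ)) μ := by
  have h := L2.integrable_inner (𝕜 := ℝ) (hf.toLp f) (hg.toLp g)
  refine h.congr ?_
  filter_upwards [hf.coeFn_toLp, hg.coeFn_toLp] with ω h1 h2
  rw [h1, h2]

lemma aux_integrable_mul {m : MeasurableSpace α} {μ : Measure α} {f g : α → ℝ}
    (hf : MemLp f 2 μ) (hg : MemLp g 2 μ) :
    Integrable (fun ω => f ω * g ω) μ := by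
  simpa [RCLike.inner_apply, conj_trivial, mul_comm] using aux_integrable_inner hf hg

lemma aux_integrable_normsq {E : Type*} [NormedAddCommGroup E] [InnerProductSpace ℝ E]
    {m : MeasurableSpace α} {μ : Measure α}
    {f : α → E} (hf : MemLp f 2 μ) : Integrable (fun ω => ‖f ω‖ ^ 2) μ := by
  have := aux_integrable_inner hf hf
  refine this.congr (Filter.Eventually.of_forall fun ω => ?_)
  exact real_inner_self_eq_norm_sq _

lemma aux_condexp_clm {E F : Type*} [NormedAddCommGroup E] [NormedSpace ℝ E] [CompleteSpace E]
    [NormedAddCommGroup F] [NormedSpace ℝ F] [CompleteSpace F]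
    (hm : m ≤ m0) {μ : Measure α} [IsFiniteMeasure μ] (T : E →L[ℝ] F) {f : α → E}
    (hf : Integrable f μ) :
    μ[fun ω => T (f ω)|m] =ᵐ[μ] fun ω => T ((μ[f|m]) ω) := by
  refine (ae_eq_condExp_of_forall_setIntegral_eq hm (T.integrable_comp hf)
    (fun s _ _ => (T.integrable_comp integrable_condExp).integrableOn)
    (fun s hs hμs => ?_) ?_).symm
  · rw [T.integral_comp_comm integrable_condExp.integrableOn,
      setIntegral_condExp hm hf hs, T.integral_comp_comm hf.integrableOn]
  · exact ((T.continuous.comp_stronglyMeasurable stronglyMeasurable_condExp :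
      StronglyMeasurable[m] _)).aestronglyMeasurable
end Aux

theorem stmt_11 {Ω : Type*} {m0 : MeasurableSpace Ω} (P : Measure Ω) [IsProbabilityMeasure P]
    {d : ℕ} (f : EuclideanSpace ℝ (Fin d) → ℝ) (hdiff : Differentiable ℝ f)
    (θ : EuclideanSpace ℝ (Fin d))
    (ℱ : Filtration ℕ m0)
    (gs : ℕ → Ω → EuclideanSpace ℝ (Fin d))
    (hadapted : Adapted ℱ gs)
    (hint : ∀ s, MemLp (gs s) 2 P)
    (hmean : ∀ s, P[gs (s + 1) | ℱ s] =ᵐ[P] fun _ => gradient f θ)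
    (σ : ℝ)
    (hvar : ∀ s, ∀ᵐ ω ∂P, (P[(fun ω' => ‖gs (s + 1) ω' - gradient f θ‖ ^ 2) | ℱ s]) ω ≤ σ ^ 2)
    (b : Ω → ℕ) (hb : IsStoppingTime ℱ (fun ω => (b ω : WithTop ℕ)))
    (bmax : ℕ) (hbmax : ∀ ω, b ω ≤ bmax)
    (g : Ω → EuclideanSpace ℝ (Fin d))
    (hg : ∀ ω, g ω = ((b ω : ℝ))⁻¹ • ∑ s ∈ Finset.range (b ω), gs (s + 1) ω) :
    ∫ ω, ((b ω : ℝ)) ^ 2 * ‖g ω‖ ^ 2 ∂P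
      ≤ 2 * bmax * ∫ ω, (b ω : ℝ) * ‖gradient f θ‖ ^ 2 ∂P
        + 2 * σ ^ 2 * ∫ ω, (b ω : ℝ) ∂P := by
  classical
  set c : EuclideanSpace ℝ (Fin d) := gradient f θ with hc
  set X : ℕ → Ω → EuclideanSpace ℝ (Fin d) := fun s ω => gs (s + 1) ω - c with hXdef
  set A : ℕ → Set Ω := fun s => {ω | s < b ω} with hAdef
  set Y : ℕ → Ω → EuclideanSpace ℝ (Fin d) := fun s => (A s).indicator (X s) with hYdef
  set S : Ω → EuclideanSpace ℝ (Fin d) := fun ω => ∑ s ∈ Finset.range bmax, Y s ω with hSdef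
  have hpr : ∀ (i : Fin d) (x : EuclideanSpace ℝ (Fin d)),
      (EuclideanSpace.proj (𝕜 := ℝ) i) x = x i := fun _ _ => rfl
  -- basic measurability / integrability facts
  have hAmeas : ∀ s, MeasurableSet[ℱ s] (A s) := by
    intro s
    have := (hb s).compl
    convert this using 1
    ext ω; simp only [hAdef, Set.mem_setOf_eq, Set.mem_compl_iff, not_le]
    exact WithTop.coe_lt_coe.symm
  have hAmeas0 : ∀ s, MeasurableSet (A s) := fun s => ℱ.le s _ (hAmeas s)
  have hXmem : ∀ s, MemLp (X s) 2 P := fun s => (hint (s + 1)).sub (memLp_const c)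
  have hXint : ∀ s, Integrable (X s) P := fun s => (hXmem s).integrable one_le_two
  have hYmem : ∀ s, MemLp (Y s) 2 P := fun s => (hXmem s).indicator (hAmeas0 s)
  have hSmem : MemLp S 2 P := by
    have h := memLp_finset_sum' (μ := P) (Finset.range bmax) (fun s _ => hYmem s)
    refine h.ae_eq (Filter.Eventually.of_forall fun ω => ?_)
    simp [hSdef, Finset.sum_apply]
  have hXsm : ∀ s t, s < t → StronglyMeasurable[ℱ t] (X s) := by
    intro s t hst
    exact ((hadapted (s + 1)).mono (ℱ.mono hst) le_rfl).stronglyMeasurable.sub stronglyMeasurable_const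
  -- coordinate conditional mean zero
  have hzero : ∀ t (i : Fin d), P[(fun ω => X t ω i)|ℱ t] =ᵐ[P] fun _ => (0 : ℝ) := by
    intro t i
    have hXeq : (fun ω => X t ω i)
        = (fun ω => (EuclideanSpace.proj (𝕜 := ℝ) i) (gs (t + 1) ω)) - fun _ => c i := by
      funext ω; simp [hXdef, hpr]
    rw [hXeq]
    have h1 := condExp_sub (μ := P) (m := ℱ t)
      ((EuclideanSpace.proj (𝕜 := ℝ) i).integrable_comp ((hint (t + 1)).integrable one_le_two))
      (integrable_const (c i))
    refine h1.trans ?_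
    have h2 := aux_condexp_clm (ℱ.le t) (μ := P) (EuclideanSpace.proj (𝕜 := ℝ) i)
      ((hint (t + 1)).integrable one_le_two)
    have h3 : (fun ω => (EuclideanSpace.proj (𝕜 := ℝ) i) ((P[gs (t + 1)|ℱ t]) ω))
        =ᵐ[P] fun _ => c i := by
      filter_upwards [hmean t] with ω hω
      simp [hω, hpr]
    have h4 : P[(fun _ : Ω => c i)|ℱ t] = fun _ => c i := condExp_const (ℱ.le t) (c i)
    filter_upwards [h2.trans h3] with ω hω
    simp only [Pi.sub_apply, hω, h4, sub_self]
  -- coordinate MemLp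
  have hXcoord : ∀ s (i : Fin d), MemLp (fun ω => X s ω i) 2 P := by
    intro s i
    have := (EuclideanSpace.proj (𝕜 := ℝ) i).comp_memLp' (hXmem s)
    refine this.ae_eq (Filter.Eventually.of_forall fun ω => ?_)
    simp [Function.comp, hpr]
  have hYcoord : ∀ s (i : Fin d), MemLp (fun ω => Y s ω i) 2 P := by
    intro s i
    have := ((hXcoord s i).indicator (hAmeas0 s))
    refine this.ae_eq (Filter.Eventually.of_forall fun ω => ?_)
    by_cases h : ω ∈ A s <;> simp [hYdef, Set.indicator_apply, h]
  -- cross terms vanish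
  have hcross : ∀ s t, s < t → ∫ ω, (inner ℝ (Y s ω) (Y t ω) : ℝ) ∂P = 0 := by
    intro s t hst
    have hinner : ∀ ω, (inner ℝ (Y s ω) (Y t ω) : ℝ) = ∑ i : Fin d, Y s ω i * Y t ω i := by
      intro ω
      simp [PiLp.inner_apply, RCLike.inner_apply, conj_trivial, mul_comm]
    have key : ∀ i : Fin d, ∫ ω, Y s ω i * Y t ω i ∂P = 0 := by
      intro i
      set u : Ω → ℝ := (A s ∩ A t).indicator (fun ω => X s ω i) with hudef
      set v : Ω → ℝ := fun ω => X t ω i with hvdef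
      have hpt : ∀ ω, Y s ω i * Y t ω i = u ω * v ω := by
        intro ω
        by_cases h1 : ω ∈ A s <;> by_cases h2 : ω ∈ A t <;>
          simp [hYdef, hudef, hvdef, Set.indicator_apply, h1, h2]
      have humeas : StronglyMeasurable[ℱ t] u := by
        refine StronglyMeasurable.indicator ?_
          (((ℱ.mono hst.le) _ (hAmeas s)).inter (hAmeas t))
        exact ((EuclideanSpace.proj (𝕜 := ℝ) i).continuous.comp_stronglyMeasurable
          (hXsm s t hst))
      have humem : MemLp u 2 P :=
        (hXcoord s i).indicator ((hAmeas0 s).inter (hAmeas0 t))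
      have hvmem : MemLp v 2 P := hXcoord t i
      have huv_int : Integrable (u * v) P := aux_integrable_mul humem hvmem
      have hv_int : Integrable v P := hvmem.integrable one_le_two
      have hpull := condExp_mul_of_stronglyMeasurable_left (μ := P) humeas huv_int hv_int
      have hzero' : u * P[v|ℱ t] =ᵐ[P] 0 := by
        filter_upwards [hzero t i] with ω hω
        simp [Pi.mul_apply, hvdef, hω]
      calc ∫ ω, Y s ω i * Y t ω i ∂P = ∫ ω, (u * v) ω ∂P :=
            integral_congr_ae (Filter.Eventually.of_forall hpt)
        _ = ∫ ω, (P[u * v|ℱ t]) ω ∂P := (integral_condExp (ℱ.le t)).symm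
        _ = 0 := by rw [integral_congr_ae (hpull.trans hzero')]; simp
    calc ∫ ω, (inner ℝ (Y s ω) (Y t ω) : ℝ) ∂P
        = ∫ ω, ∑ i : Fin d, Y s ω i * Y t ω i ∂P :=
          integral_congr_ae (Filter.Eventually.of_forall hinner)
      _ = ∑ i : Fin d, ∫ ω, Y s ω i * Y t ω i ∂P :=
          integral_finset_sum _ (fun i _ => aux_integrable_mul (hYcoord s i) (hYcoord t i))
      _ = 0 := by simp [key]
  -- diagonal bound
  have hσ2 : (0:ℝ) ≤ σ ^ 2 := sq_nonneg σ
  have hdiag : ∀ s, ∫ ω, ‖Y s ω‖ ^ 2 ∂P ≤ σ ^ 2 * (P (A s)).toReal := by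
    intro s
    set χ : Ω → ℝ := (A s).indicator (fun _ => (1:ℝ)) with hχdef
    set h : Ω → ℝ := fun ω => ‖X s ω‖ ^ 2 with hhdef
    have hχ01 : ∀ ω, χ ω = 0 ∨ χ ω = 1 := by
      intro ω; by_cases hω : ω ∈ A s <;> simp [hχdef, Set.indicator_apply, hω]
    have hχnonneg : ∀ ω, 0 ≤ χ ω := by
      intro ω; rcases hχ01 ω with h' | h' <;> rw [h'] <;> norm_num
    have hpt : ∀ ω, ‖Y s ω‖ ^ 2 = (χ * h) ω := by
      intro ω
      by_cases hω : ω ∈ A s <;> simp [hYdef, hχdef, hhdef, Set.indicator_apply, hω]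
    have hh_int : Integrable h P := aux_integrable_normsq (hXmem s)
    have hχmeas : StronglyMeasurable[ℱ s] χ :=
      stronglyMeasurable_const.indicator (hAmeas s)
    have hχh_int : Integrable (χ * h) P := by
      refine hh_int.bdd_mul (c := 1) ((hχmeas.mono (ℱ.le s)).aestronglyMeasurable)
        (Filter.Eventually.of_forall fun ω => ?_)
      rcases hχ01 ω with h' | h' <;> rw [h'] <;> norm_num
    have hpull := condExp_mul_of_stronglyMeasurable_left (μ := P) hχmeas hχh_int hh_int
    have hhvar := hvar s
    have hle : ∀ᵐ ω ∂P, (P[χ * h|ℱ s]) ω ≤ χ ω * σ ^ 2 := by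
      filter_upwards [hpull, hhvar] with ω h1 h2
      rw [h1, Pi.mul_apply]
      rcases hχ01 ω with h' | h' <;> rw [h'] <;>
        simp [h2, show h = fun ω' => ‖gs (s + 1) ω' - c‖ ^ 2 from rfl]
    have hχ_int : Integrable χ P := (integrable_const (1:ℝ)).indicator (hAmeas0 s)
    calc ∫ ω, ‖Y s ω‖ ^ 2 ∂P = ∫ ω, (χ * h) ω ∂P :=
          integral_congr_ae (Filter.Eventually.of_forall hpt)
      _ = ∫ ω, (P[χ * h|ℱ s]) ω ∂P := (integral_condExp (ℱ.le s)).symm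
      _ ≤ ∫ ω, χ ω * σ ^ 2 ∂P :=
          integral_mono_ae integrable_condExp (hχ_int.mul_const _) hle
      _ = (∫ ω, χ ω ∂P) * σ ^ 2 := integral_mul_const _ _
      _ = (P (A s)).toReal * σ ^ 2 := by
          rw [hχdef, integral_indicator_const _ (hAmeas0 s)]; simp [Measure.real]
      _ = σ ^ 2 * (P (A s)).toReal := mul_comm _ _
  -- expectation of b
  have hχint : ∀ s, Integrable ((A s).indicator (fun _ => (1:ℝ))) P :=
    fun s => (integrable_const 1).indicator (hAmeas0 s)
  have hbpt : ∀ ω, (b ω : ℝ)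
      = ∑ s ∈ Finset.range bmax, (A s).indicator (fun _ => (1:ℝ)) ω := by
    intro ω
    have h1 : ∀ s, (A s).indicator (fun _ => (1:ℝ)) ω = if s < b ω then 1 else 0 := by
      intro s; simp [Set.indicator_apply, hAdef, Set.mem_setOf_eq]
    simp_rw [h1]
    rw [Finset.sum_boole]
    have hfil : (Finset.range bmax).filter (fun s => s < b ω) = Finset.range (b ω) := by
      ext x
      simp only [Finset.mem_filter, Finset.mem_range]
      exact ⟨fun h => h.2, fun h => ⟨lt_of_lt_of_le h (hbmax ω), h⟩⟩
    rw [hfil, Finset.card_range]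
  have hb_int : Integrable (fun ω => (b ω : ℝ)) P := by
    refine (integrable_finset_sum _ (fun s (_ : s ∈ Finset.range bmax) => hχint s)).congr
      (Filter.Eventually.of_forall fun ω => ?_)
    simpa using (hbpt ω).symm
  have hEb : ∫ ω, (b ω : ℝ) ∂P = ∑ s ∈ Finset.range bmax, (P (A s)).toReal := by
    rw [integral_congr_ae (Filter.Eventually.of_forall hbpt),
      integral_finset_sum _ (fun s _ => hχint s)]
    refine Finset.sum_congr rfl fun s _ => ?_
    rw [integral_indicator_const _ (hAmeas0 s)]; simp [Measure.real]
  -- second moment of S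
  have hYY_int : ∀ s t, Integrable (fun ω => (inner ℝ (Y s ω) (Y t ω) : ℝ)) P :=
    fun s t => aux_integrable_inner (hYmem s) (hYmem t)
  have hoffdiag : ∀ s t, s ≠ t → ∫ ω, (inner ℝ (Y s ω) (Y t ω) : ℝ) ∂P = 0 := by
    intro s t hst
    rcases lt_or_gt_of_ne hst with h | h
    · exact hcross s t h
    · rw [← hcross t s h]
      exact integral_congr_ae (Filter.Eventually.of_forall fun ω => real_inner_comm _ _)
  have hexp : ∀ ω, ‖S ω‖ ^ 2
      = ∑ s ∈ Finset.range bmax, ∑ t ∈ Finset.range bmax, (inner ℝ (Y s ω) (Y t ω) : ℝ) := by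
    intro ω
    rw [← real_inner_self_eq_norm_sq, hSdef]
    simp only
    rw [sum_inner]
    exact Finset.sum_congr rfl fun s _ => inner_sum _ _ _
  have hS2 : ∫ ω, ‖S ω‖ ^ 2 ∂P ≤ σ ^ 2 * ∫ ω, (b ω : ℝ) ∂P := by
    have e1 : ∫ ω, ‖S ω‖ ^ 2 ∂P
        = ∑ s ∈ Finset.range bmax, ∫ ω, (inner ℝ (Y s ω) (Y s ω) : ℝ) ∂P := by
      calc ∫ ω, ‖S ω‖ ^ 2 ∂P
          = ∫ ω, ∑ s ∈ Finset.range bmax, ∑ t ∈ Finset.range bmax,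
              (inner ℝ (Y s ω) (Y t ω) : ℝ) ∂P :=
            integral_congr_ae (Filter.Eventually.of_forall hexp)
        _ = ∑ s ∈ Finset.range bmax, ∫ ω, ∑ t ∈ Finset.range bmax,
              (inner ℝ (Y s ω) (Y t ω) : ℝ) ∂P :=
            integral_finset_sum _ (fun s _ => integrable_finset_sum _ (fun t _ => hYY_int s t))
        _ = ∑ s ∈ Finset.range bmax, ∑ t ∈ Finset.range bmax,
              ∫ ω, (inner ℝ (Y s ω) (Y t ω) : ℝ) ∂P :=
            Finset.sum_congr rfl fun s _ => integral_finset_sum _ fun t _ => hYY_int s t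
        _ = ∑ s ∈ Finset.range bmax, ∫ ω, (inner ℝ (Y s ω) (Y s ω) : ℝ) ∂P := by
            refine Finset.sum_congr rfl fun s hs => ?_
            exact Finset.sum_eq_single_of_mem s hs
              (fun t _ hts => hoffdiag s t (Ne.symm hts))
    have e2 : ∀ s, ∫ ω, (inner ℝ (Y s ω) (Y s ω) : ℝ) ∂P = ∫ ω, ‖Y s ω‖ ^ 2 ∂P :=
      fun s => integral_congr_ae (Filter.Eventually.of_forall fun ω =>
        real_inner_self_eq_norm_sq _)
    rw [e1, hEb, Finset.mul_sum]
    refine Finset.sum_le_sum fun s _ => ?_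
    rw [e2 s]
    exact hdiag s
  -- pointwise representation and bound
  have hSrep : ∀ ω, S ω = (∑ s ∈ Finset.range (b ω), gs (s + 1) ω) - (b ω : ℝ) • c := by
    intro ω
    have h1 : S ω = ∑ s ∈ Finset.range (b ω), X s ω := by
      have hzero' : ∀ s ∈ Finset.range bmax, s ∉ Finset.range (b ω) → Y s ω = 0 := by
        intro s _ hs'
        have hns : ω ∉ A s := fun hcon => hs' (Finset.mem_range.mpr hcon)
        exact Set.indicator_of_notMem hns (X s)
      rw [hSdef]
      simp only
      rw [← Finset.sum_subset (Finset.range_subset_range.mpr (hbmax ω)) hzero']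
      refine Finset.sum_congr rfl fun s hs => ?_
      have hmem : ω ∈ A s := Finset.mem_range.mp hs
      exact Set.indicator_of_mem hmem (X s)
    rw [h1]
    simp only [hXdef]
    rw [Finset.sum_sub_distrib, Finset.sum_const, Finset.card_range,
      ← Nat.cast_smul_eq_nsmul ℝ]
  have hTpt : ∀ ω, (b ω : ℝ) ^ 2 * ‖g ω‖ ^ 2 = ‖S ω + (b ω : ℝ) • c‖ ^ 2 := by
    intro ω
    rw [hSrep ω, sub_add_cancel]
    by_cases h0 : b ω = 0
    · simp [h0, hg ω]
    · rw [hg ω, norm_smul]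
      have hbne : ((b ω : ℝ)) ≠ 0 := Nat.cast_ne_zero.mpr h0
      rw [mul_pow, norm_inv, Real.norm_natCast]
      field_simp
  have hbc_mem : MemLp (fun ω => (b ω : ℝ) • c) 2 P := by
    have h := memLp_finset_sum' (μ := P) (Finset.range bmax)
      (fun s (_ : s ∈ Finset.range bmax) =>
        (memLp_const (p := 2) (μ := P) c).indicator (hAmeas0 s))
    refine h.ae_eq (Filter.Eventually.of_forall fun ω => ?_)
    simp only [Finset.sum_apply]
    show ∑ s ∈ Finset.range bmax, (A s).indicator (fun _ => c) ω = (b ω : ℝ) • c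
    rw [hbpt ω, Finset.sum_smul]
    refine Finset.sum_congr rfl fun s _ => ?_
    by_cases hω : ω ∈ A s <;> simp [Set.indicator_apply, hω]
  have hT_mem : MemLp (fun ω => S ω + (b ω : ℝ) • c) 2 P := hSmem.add hbc_mem
  have hLHS_int : Integrable (fun ω => (b ω : ℝ) ^ 2 * ‖g ω‖ ^ 2) P := by
    refine (aux_integrable_normsq hT_mem).congr
      (Filter.Eventually.of_forall fun ω => (hTpt ω).symm)
  have hS2_int : Integrable (fun ω => ‖S ω‖ ^ 2) P := aux_integrable_normsq hSmem
  have hbc2_int : Integrable (fun ω => (b ω : ℝ) * ‖c‖ ^ 2) P := hb_int.mul_const _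
  have hptbound : ∀ ω, (b ω : ℝ) ^ 2 * ‖g ω‖ ^ 2
      ≤ 2 * ‖S ω‖ ^ 2 + 2 * (bmax : ℝ) * ((b ω : ℝ) * ‖c‖ ^ 2) := by
    intro ω
    rw [hTpt ω]
    have h1 : ‖S ω + (b ω : ℝ) • c‖ ≤ ‖S ω‖ + ‖(b ω : ℝ) • c‖ := norm_add_le _ _
    have h2 : ‖(b ω : ℝ) • c‖ ^ 2 = (b ω : ℝ) ^ 2 * ‖c‖ ^ 2 := by
      rw [norm_smul, mul_pow, Real.norm_natCast]
    have hble : (b ω : ℝ) ≤ (bmax : ℝ) := Nat.cast_le.mpr (hbmax ω)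
    have hbnn : (0:ℝ) ≤ (b ω : ℝ) := Nat.cast_nonneg _
    have hb2 : (b ω : ℝ) ^ 2 ≤ (bmax : ℝ) * (b ω : ℝ) := by nlinarith
    have hcn : (0:ℝ) ≤ ‖c‖ ^ 2 := sq_nonneg _
    nlinarith [norm_nonneg (S ω), norm_nonneg ((b ω : ℝ) • c),
      norm_nonneg (S ω + (b ω : ℝ) • c), sq_nonneg (‖S ω‖ - ‖(b ω : ℝ) • c‖)]
  -- put everything together
  have hmono : ∫ ω, (b ω : ℝ) ^ 2 * ‖g ω‖ ^ 2 ∂P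
      ≤ ∫ ω, (2 * ‖S ω‖ ^ 2 + 2 * (bmax : ℝ) * ((b ω : ℝ) * ‖c‖ ^ 2)) ∂P := by
    refine integral_mono hLHS_int ?_ hptbound
    exact (hS2_int.const_mul 2).add (hbc2_int.const_mul _)
  have hsplit : ∫ ω, (2 * ‖S ω‖ ^ 2 + 2 * (bmax : ℝ) * ((b ω : ℝ) * ‖c‖ ^ 2)) ∂P
      = 2 * ∫ ω, ‖S ω‖ ^ 2 ∂P + 2 * (bmax : ℝ) * ∫ ω, (b ω : ℝ) * ‖c‖ ^ 2 ∂P := by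
    rw [integral_add (hS2_int.const_mul 2) (hbc2_int.const_mul _),
      integral_const_mul, integral_const_mul]
  have hfinal := hmono.trans_eq hsplit
  have h2S : 2 * ∫ ω, ‖S ω‖ ^ 2 ∂P ≤ 2 * (σ ^ 2 * ∫ ω, (b ω : ℝ) ∂P) := by
    linarith [hS2]
  calc ∫ ω, (b ω : ℝ) ^ 2 * ‖g ω‖ ^ 2 ∂P
      ≤ 2 * ∫ ω, ‖S ω‖ ^ 2 ∂P + 2 * (bmax : ℝ) * ∫ ω, (b ω : ℝ) * ‖c‖ ^ 2 ∂P := hfinal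
    _ ≤ 2 * (σ ^ 2 * ∫ ω, (b ω : ℝ) ∂P)
        + 2 * (bmax : ℝ) * ∫ ω, (b ω : ℝ) * ‖c‖ ^ 2 ∂P := by linarith
    _ = 2 * (bmax : ℝ) * ∫ ω, (b ω : ℝ) * ‖c‖ ^ 2 ∂P
        + 2 * σ ^ 2 * ∫ ω, (b ω : ℝ) ∂P := by ring
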